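/- Let C_n be the cycle graph on vertices v_1,…,v_n with edges e_i from v_i to v_{i+1 mod n}. Every CK family S = (S_v, S_e) for C_n on a Hilbert space H is unitarily equivalent to one realized on ℂ^n ⊗ K for a Hilbert space K, with S_{e_i} ≅ E_{i,i+1} ⊗ I for 1 ≤ i < n and S_{e_n} ≅ E_{n,1} ⊗ V for some unitary V on K, where E_{i,j} are matrix units. -/

import Mathlib

structure DirectedGraph where
  V : Type
  E : Type
  src : E → V
  rng : E → V

namespace DirectedGraph

/-- Two edges are composable (as in `e₂ e₁`, `e₂` after `e₁`) when `s(e₂) = r(e₁)`. -/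
def Composable (G : DirectedGraph) (a b : G.E) : Prop := G.src a = G.rng b

/-- A list `[eₙ, …, e₁]` of edges is a path when consecutive edges are composable. -/
def IsPathList (G : DirectedGraph) (μ : List G.E) : Prop := List.Chain' G.Composable μ

/-- The path `μ` has source `v` (vacuous for the empty path). -/
def SrcIs (G : DirectedGraph) (μ : List G.E) (v : G.V) : Prop :=
  ∀ e ∈ μ.getLast?, G.src e = v

/-- The path `μ`, regarded as a path with source `v`, has range `w`. -/
def RngIs (G : DirectedGraph) (v : G.V) (μ : List G.E) (w : G.V) : Prop :=
  match μ with
  | [] => v = w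
  | e :: _ => G.rng e = w

/-- `μ` is a path with source `v`. -/
def IsPathAt (G : DirectedGraph) (v : G.V) (μ : List G.E) : Prop :=
  G.IsPathList μ ∧ G.SrcIs μ v

/-- `μ` is a cycle at `v` : a path with source and range `v`. -/
def IsCycleAt (G : DirectedGraph) (v : G.V) (μ : List G.E) : Prop :=
  G.IsPathAt v μ ∧ G.RngIs v μ v

end DirectedGraph

/-- A Toeplitz–Cuntz–Krieger family for the directed graph `G` on the Hilbert space `H`:
pairwise orthogonal projections `Sv v`, partial isometries `Se e` with
`(Se e)* (Se e) = Sv (s e)`, and `∑_{e ∈ F} (Se e)(Se e)* ≤ Sv v` for finite `F ⊆ r⁻¹(v)`. -/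
structure TCKFamily (G : DirectedGraph) (H : Type) [NormedAddCommGroup H]
    [InnerProductSpace ℂ H] [CompleteSpace H] where
  Sv : G.V → H →L[ℂ] H
  Se : G.E → H →L[ℂ] H
  sv_sa : ∀ v, IsSelfAdjoint (Sv v)
  sv_idem : ∀ v, Sv v * Sv v = Sv v
  sv_orth : ∀ v w, v ≠ w → Sv v * Sv w = 0
  se_isom : ∀ e, ContinuousLinearMap.adjoint (Se e) * Se e = Sv (G.src e)
  tck_ineq : ∀ (v : G.V) (F : Finset G.E), (∀ e ∈ F, G.rng e = v) →
    ContinuousLinearMap.IsPositive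
      (Sv v - ∑ e ∈ F, Se e * ContinuousLinearMap.adjoint (Se e))

/-- The cycle graph `Cₙ` on vertices `Fin n`, with edge `i` from `i` to `i + 1 (mod n)`. -/
def cycleGraph (n : ℕ) [NeZero n] : DirectedGraph :=
  { V := Fin n, E := Fin n, src := id, rng := fun i => i + 1 }

open Fin.NatCast

namespace Stmt11Aux
open ContinuousLinearMap

lemma mul_proj {H : Type} [NormedAddCommGroup H] [InnerProductSpace ℂ H] [CompleteSpace H]
    {T p : H →L[ℂ] H} (hsa : IsSelfAdjoint p) (hidem : p * p = p)
    (h : adjoint T * T = p) : T * p = T := by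
  have hTsT : star T * T = p := by rwa [star_eq_adjoint]
  have h0 : star (T * (1 - p)) * (T * (1 - p)) = 0 := by
    rw [star_mul, star_sub, star_one, hsa.star_eq]
    calc (1 - p) * star T * (T * (1 - p)) = (1 - p) * (star T * T) * (1 - p) := by
          noncomm_ring
      _ = (1 - p) * p * (1 - p) := by rw [hTsT]
      _ = 0 := by simp [sub_mul, mul_sub, hidem]
  have h1 : T * (1 - p) = 0 := (CStarRing.star_mul_self_eq_zero_iff _).mp h0
  have h2 : T - T * p = 0 := by rw [← mul_one T, mul_assoc, one_mul, ← mul_sub]; exact h1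
  rw [sub_eq_zero] at h2; exact h2.symm

section cyc
variable {n : ℕ} [NeZero n] {H : Type} [NormedAddCommGroup H]
    [InnerProductSpace ℂ H] [CompleteSpace H] (S : TCKFamily (cycleGraph n) H)

/-- The vertex projections, indexed by `Fin n`. -/
def p : Fin n → (H →L[ℂ] H) := S.Sv

/-- The edge partial isometries, indexed by `Fin n`. -/
def s : Fin n → (H →L[ℂ] H) := S.Se

lemma p_sa (v : Fin n) : IsSelfAdjoint (p S v) := S.sv_sa v
lemma p_idem (v : Fin n) : p S v * p S v = p S v := S.sv_idem v
lemma p_orth (v w : Fin n) (h : v ≠ w) : p S v * p S w = 0 := S.sv_orth v w h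
lemma hse (i : Fin n) : adjoint (s S i) * s S i = p S i := S.se_isom i

lemma se_mul_sv (i : Fin n) : s S i * p S i = s S i :=
  mul_proj (p_sa S i) (p_idem S i) (hse S i)

noncomputable def Bop : ℕ → (H →L[ℂ] H)
  | 0 => p S 0
  | (k+1) => Bop k * adjoint (s S (k : Fin n))

variable (hck : ∀ i : Fin n, s S i * ContinuousLinearMap.adjoint (s S i) = p S (i + 1))
include hck

lemma sv_mul_se (i : Fin n) : p S (i + 1) * s S i = s S i := by
  have h : adjoint (adjoint (s S i)) * adjoint (s S i) = p S (i+1) := by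
    rw [adjoint_adjoint]; exact hck i
  have h1 := mul_proj (p_sa S (i+1)) (p_idem S (i+1)) h
  have h2 := congrArg star h1
  rw [star_mul] at h2
  simpa [star_eq_adjoint, adjoint_adjoint, (p_sa S (i+1)).star_eq] using h2

omit hck in
lemma sv0_mul_Bop (k : ℕ) : p S 0 * Bop S k = Bop S k := by
  induction k with
  | zero => exact p_idem S 0
  | succ k ih => rw [Bop, ← mul_assoc, ih]

lemma Bop_adj_mul (k : ℕ) : adjoint (Bop S k) * Bop S k = p S (k : Fin n) := by
  induction k with
  | zero =>
    show adjoint (p S 0) * p S 0 = _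
    rw [← star_eq_adjoint, (p_sa S 0).star_eq, p_idem S 0]
    norm_num
  | succ k ih =>
    rw [Bop, ← star_eq_adjoint, star_mul, star_eq_adjoint, star_eq_adjoint, adjoint_adjoint]
    calc s S (k:Fin n) * adjoint (Bop S k) * (Bop S k * adjoint (s S (k:Fin n)))
        = s S (k:Fin n) * (adjoint (Bop S k) * Bop S k) * adjoint (s S (k:Fin n)) := by
          noncomm_ring
      _ = s S (k:Fin n) * p S (k:Fin n) * adjoint (s S (k:Fin n)) := by rw [ih]
      _ = s S (k:Fin n) * adjoint (s S (k:Fin n)) := by rw [se_mul_sv]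
      _ = p S ((k:Fin n) + 1) := hck _
      _ = p S ((k+1 : ℕ) : Fin n) := by rw [Nat.cast_succ]

lemma Bop_mul_sv (k : ℕ) : Bop S k * p S (k : Fin n) = Bop S k :=
  mul_proj (p_sa S _) (p_idem S _) (Bop_adj_mul S hck k)

lemma sv_mul_Bop_adj (k : ℕ) : p S (k : Fin n) * adjoint (Bop S k) = adjoint (Bop S k) := by
  have h2 := congrArg star (Bop_mul_sv S hck k)
  rw [star_mul] at h2
  simpa [star_eq_adjoint, adjoint_adjoint, (p_sa S _).star_eq] using h2

lemma Bop_mul_adj (k : ℕ) : Bop S k * adjoint (Bop S k) = p S 0 := by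
  induction k with
  | zero =>
    show p S 0 * adjoint (p S 0) = _
    rw [← star_eq_adjoint, (p_sa S 0).star_eq]; exact p_idem S 0
  | succ k ih =>
    rw [Bop, ← star_eq_adjoint (Bop S k * _), star_mul, star_eq_adjoint, star_eq_adjoint,
      adjoint_adjoint]
    calc Bop S k * adjoint (s S (k:Fin n)) * (s S (k:Fin n) * adjoint (Bop S k))
        = Bop S k * (adjoint (s S (k:Fin n)) * s S (k:Fin n)) * adjoint (Bop S k) := by
          noncomm_ring
      _ = Bop S k * p S (k:Fin n) * adjoint (Bop S k) := by rw [hse]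
      _ = Bop S k * adjoint (Bop S k) := by rw [Bop_mul_sv S hck]
      _ = p S 0 := ih

end cyc
end Stmt11Aux

namespace Stmt11Aux
open ContinuousLinearMap
open scoped InnerProductSpace

section cyc2
variable {n : ℕ} [NeZero n] {H : Type} [NormedAddCommGroup H]
    [InnerProductSpace ℂ H] [CompleteSpace H] (S : TCKFamily (cycleGraph n) H)

/-- The model space: range of the projection `p 0`, as kernel of `p 0 - 1`. -/
noncomputable def Kker : Submodule ℂ H := LinearMap.ker (((p S 0) - 1 : H →L[ℂ] H) : H →ₗ[ℂ] H)

lemma mem_Kker {x : H} : x ∈ Kker S ↔ p S 0 x = x := by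
  simp only [Kker, LinearMap.mem_ker, ContinuousLinearMap.coe_coe,
    ContinuousLinearMap.sub_apply, ContinuousLinearMap.one_apply, sub_eq_zero]

lemma mem_Kker_of_op {A : H →L[ℂ] H} (h : p S 0 * A = A) (x : H) : A x ∈ Kker S := by
  rw [mem_Kker]
  have := ContinuousLinearMap.ext_iff.mp h x
  simpa [ContinuousLinearMap.mul_apply] using this

lemma Bop_mem (k : ℕ) (x : H) : Bop S k x ∈ Kker S :=
  mem_Kker_of_op S (sv0_mul_Bop S k) x

lemma cast_pred_add_one : ((n - 1 : ℕ) : Fin n) + 1 = 0 := by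
  have h : (n - 1) + 1 = n := Nat.succ_pred_eq_of_pos (Nat.pos_of_ne_zero (NeZero.ne n))
  rw [← Nat.cast_succ]
  show ((n - 1 + 1 : ℕ) : Fin n) = 0
  rw [h, Fin.natCast_self]

variable (hck : ∀ i : Fin n, s S i * ContinuousLinearMap.adjoint (s S i) = p S (i + 1))
include hck

lemma p0_mul_spred : p S 0 * s S ((n - 1 : ℕ) : Fin n) = s S ((n - 1 : ℕ) : Fin n) := by
  have := sv_mul_se S hck ((n - 1 : ℕ) : Fin n)
  rwa [cast_pred_add_one] at this

lemma Bop_mul_p (a v : Fin n) :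
    Bop S a.val * p S v = if a = v then Bop S a.val else 0 := by
  split
  · next h =>
    subst h
    have := Bop_mul_sv S hck a.val
    rwa [Fin.cast_val_eq_self] at this
  · next h =>
    rw [← Bop_mul_sv S hck a.val, mul_assoc, Fin.cast_val_eq_self,
      p_orth S a v h, mul_zero]

lemma Bop_mul_Bop_adj (a b : Fin n) :
    Bop S a.val * adjoint (Bop S b.val) = if a = b then p S 0 else 0 := by
  have h := sv_mul_Bop_adj S hck b.val
  rw [Fin.cast_val_eq_self] at h
  rw [← h, ← mul_assoc, Bop_mul_p S hck]
  split
  · next heq => subst heq; exact Bop_mul_adj S hck a.val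
  · rw [zero_mul]

lemma Bop_mul_s_ne (a i : Fin n) (h : a ≠ i + 1) : Bop S a.val * s S i = 0 := by
  rw [← sv_mul_se S hck i, ← mul_assoc, Bop_mul_p S hck, if_neg h, zero_mul]

lemma Bop_succ_mul_s (i : Fin n) (h : (i : ℕ) + 1 < n) :
    Bop S ((i + 1 : Fin n).val) * s S i = Bop S i.val := by
  have hcast : (i + 1 : Fin n) = ((i.val + 1 : ℕ) : Fin n) := by
    rw [Nat.cast_succ, Fin.cast_val_eq_self]
  have hval : ((i + 1 : Fin n).val) = i.val + 1 := by
    rw [hcast, Fin.val_cast_of_lt h]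
  rw [hval]
  show Bop S i.val * adjoint (s S ((i.val : ℕ) : Fin n)) * s S i = Bop S i.val
  rw [Fin.cast_val_eq_self, mul_assoc, hse]
  have := Bop_mul_p S hck i i
  rwa [if_pos rfl] at this

/-- The "full cycle" operator `V = s_{n-1} B_{n-1}†` and its inverse `W = B_{n-1} s_{n-1}†`. -/
noncomputable def Vop : H →L[ℂ] H := s S ((n - 1 : ℕ) : Fin n) * adjoint (Bop S (n - 1))

noncomputable def Wop : H →L[ℂ] H := Bop S (n - 1) * adjoint (s S ((n - 1 : ℕ) : Fin n))

omit hck in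
lemma adjoint_Vop : adjoint (Vop S) = Wop S := by
  rw [Vop, Wop, ← star_eq_adjoint, star_mul, star_eq_adjoint, star_eq_adjoint, adjoint_adjoint]

lemma Wop_mul_Vop : Wop S * Vop S = p S 0 := by
  rw [Wop, Vop]
  calc Bop S (n-1) * adjoint (s S ((n-1:ℕ) : Fin n)) *
      (s S ((n-1:ℕ) : Fin n) * adjoint (Bop S (n-1)))
      = Bop S (n-1) * (adjoint (s S ((n-1:ℕ):Fin n)) * s S ((n-1:ℕ):Fin n)) *
        adjoint (Bop S (n-1)) := by noncomm_ring
    _ = Bop S (n-1) * p S ((n-1:ℕ) : Fin n) * adjoint (Bop S (n-1)) := by rw [hse]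
    _ = Bop S (n-1) * adjoint (Bop S (n-1)) := by rw [Bop_mul_sv S hck]
    _ = p S 0 := Bop_mul_adj S hck _

lemma Vop_mul_Wop : Vop S * Wop S = p S 0 := by
  rw [Wop, Vop]
  calc s S ((n-1:ℕ):Fin n) * adjoint (Bop S (n-1)) *
      (Bop S (n-1) * adjoint (s S ((n-1:ℕ):Fin n)))
      = s S ((n-1:ℕ):Fin n) * (adjoint (Bop S (n-1)) * Bop S (n-1)) *
        adjoint (s S ((n-1:ℕ):Fin n)) := by noncomm_ring
    _ = s S ((n-1:ℕ):Fin n) * p S ((n-1:ℕ):Fin n) * adjoint (s S ((n-1:ℕ):Fin n)) := by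
        rw [Bop_adj_mul S hck]
    _ = s S ((n-1:ℕ):Fin n) * adjoint (s S ((n-1:ℕ):Fin n)) := by rw [se_mul_sv]
    _ = p S (((n-1:ℕ):Fin n) + 1) := hck _
    _ = p S 0 := by rw [cast_pred_add_one]

lemma Vop_mul_Bop : Vop S * Bop S (n - 1) = s S ((n - 1 : ℕ) : Fin n) := by
  rw [Vop, mul_assoc, Bop_adj_mul S hck, se_mul_sv]

lemma p0_mul_Vop : p S 0 * Vop S = Vop S := by
  rw [Vop, ← mul_assoc, p0_mul_spred S hck]

omit hck in
lemma p0_mul_Wop : p S 0 * Wop S = Wop S := by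
  rw [Wop, ← mul_assoc, sv0_mul_Bop]

omit hck in
lemma Kker_isClosed : IsClosed ((Kker S : Set H)) :=
  ContinuousLinearMap.isClosed_ker _

noncomputable instance : CompleteSpace ↥(Kker S) :=
  (Kker_isClosed S).completeSpace_coe

end cyc2
end Stmt11Aux

namespace Stmt11Aux
open ContinuousLinearMap
open scoped InnerProductSpace

section cyc3
variable {n : ℕ} [NeZero n] {H : Type} [NormedAddCommGroup H]
    [InnerProductSpace ℂ H] [CompleteSpace H] (S : TCKFamily (cycleGraph n) H)

attribute [irreducible] Kker

/-- The forward map `x ↦ (a ↦ B_a x)`. -/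
noncomputable def Ulin : H →ₗ[ℂ] PiLp 2 (fun _ : Fin n => ↥(Kker S)) where
  toFun x := WithLp.toLp 2 fun a => ⟨Bop S a.val x, Bop_mem S a.val x⟩
  map_add' x y := PiLp.ext fun a => Subtype.ext (by simp)
  map_smul' c x := PiLp.ext fun a => Subtype.ext (by simp)

lemma Ulin_apply (x : H) (a : Fin n) : (Ulin S x a : H) = Bop S a.val x := rfl

/-- The backward map `y ↦ ∑ B_a† y_a`. -/
noncomputable def Uinvlin : PiLp 2 (fun _ : Fin n => ↥(Kker S)) →ₗ[ℂ] H where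
  toFun y := ∑ a : Fin n, adjoint (Bop S a.val) (y a : H)
  map_add' y z := by
    simp [← Finset.sum_add_distrib]
  map_smul' c y := by
    simp [Finset.smul_sum]

variable (hck : ∀ i : Fin n, s S i * ContinuousLinearMap.adjoint (s S i) = p S (i + 1))
  (hnd : ∑ v : Fin n, p S v = 1)

include hck hnd in
lemma Uinv_Ulin (x : H) : Uinvlin S (Ulin S x) = x := by
  have key : ∀ a : Fin n, adjoint (Bop S a.val) (Bop S a.val x) = p S a x := by
    intro a
    have := ContinuousLinearMap.ext_iff.mp (Bop_adj_mul S hck a.val) x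
    simpa [ContinuousLinearMap.mul_apply, Fin.cast_val_eq_self] using this
  show (∑ a : Fin n, adjoint (Bop S a.val) ((Ulin S x a : H))) = x
  simp only [Ulin_apply, key]
  have h := ContinuousLinearMap.ext_iff.mp hnd x
  simpa [ContinuousLinearMap.sum_apply] using h

include hck in
lemma Ulin_Uinv (y : PiLp 2 (fun _ : Fin n => ↥(Kker S))) : Ulin S (Uinvlin S y) = y := by
  refine PiLp.ext fun a => ?_
  apply Subtype.ext
  show Bop S a.val (∑ b : Fin n, adjoint (Bop S b.val) (y b : H)) = (y a : H)
  rw [map_sum]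
  have key : ∀ b : Fin n, Bop S a.val (adjoint (Bop S b.val) (y b : H))
      = if a = b then (y b : H) else 0 := by
    intro b
    have h := ContinuousLinearMap.ext_iff.mp (Bop_mul_Bop_adj S hck a b) (y b : H)
    simp only [ContinuousLinearMap.mul_apply] at h
    rw [h]
    split
    · exact (mem_Kker S).mp (y b).2
    · rfl
  simp [key]

include hck hnd in
lemma Ulin_inner (x y : H) : ⟪Ulin S x, Ulin S y⟫_ℂ = ⟪x, y⟫_ℂ := by
  rw [PiLp.inner_apply]
  have key : ∀ a : Fin n, ⟪Ulin S x a, Ulin S y a⟫_ℂ = ⟪x, p S a y⟫_ℂ := by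
    intro a
    rw [Submodule.coe_inner, Ulin_apply, Ulin_apply, ← ContinuousLinearMap.adjoint_inner_right]
    congr 1
    have := ContinuousLinearMap.ext_iff.mp (Bop_adj_mul S hck a.val) y
    simpa [ContinuousLinearMap.mul_apply, Fin.cast_val_eq_self] using this
  simp only [key, ← inner_sum]
  congr 1
  have h := ContinuousLinearMap.ext_iff.mp hnd y
  simpa [ContinuousLinearMap.sum_apply] using h

/-- The unitary `U : H ≃ ⊕ₙ K`. -/
noncomputable def Uequiv : H ≃ₗᵢ[ℂ] PiLp 2 (fun _ : Fin n => ↥(Kker S)) :=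
  LinearEquiv.isometryOfInner
    (LinearEquiv.ofLinear (Ulin S) (Uinvlin S)
      (LinearMap.ext fun y => Ulin_Uinv S hck y)
      (LinearMap.ext fun x => Uinv_Ulin S hck hnd x))
    (fun x y => Ulin_inner S hck hnd x y)

lemma Uequiv_apply (x : H) : Uequiv S hck hnd x = Ulin S x := rfl

/-- The unitary `V` on `K`. -/
noncomputable def Vflin : ↥(Kker S) →ₗ[ℂ] ↥(Kker S) where
  toFun u := ⟨Vop S u, mem_Kker_of_op S (p0_mul_Vop S hck) u⟩
  map_add' u v := Subtype.ext (by simp)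
  map_smul' c u := Subtype.ext (by simp)

noncomputable def Vglin : ↥(Kker S) →ₗ[ℂ] ↥(Kker S) where
  toFun u := ⟨Wop S u, mem_Kker_of_op S (p0_mul_Wop S) u⟩
  map_add' u v := Subtype.ext (by simp)
  map_smul' c u := Subtype.ext (by simp)

include hck in
lemma Vf_Vg (u : ↥(Kker S)) : Vflin S hck (Vglin S u) = u := by
  apply Subtype.ext
  show Vop S (Wop S (u : H)) = (u : H)
  have h := ContinuousLinearMap.ext_iff.mp (Vop_mul_Wop S hck) (u : H)
  simp only [ContinuousLinearMap.mul_apply] at h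
  rw [h]
  exact (mem_Kker S).mp u.2

include hck in
lemma Vg_Vf (u : ↥(Kker S)) : Vglin S (Vflin S hck u) = u := by
  apply Subtype.ext
  show Wop S (Vop S (u : H)) = (u : H)
  have h := ContinuousLinearMap.ext_iff.mp (Wop_mul_Vop S hck) (u : H)
  simp only [ContinuousLinearMap.mul_apply] at h
  rw [h]
  exact (mem_Kker S).mp u.2

include hck in
lemma Vf_inner (u v : ↥(Kker S)) : ⟪Vflin S hck u, Vflin S hck v⟫_ℂ = ⟪u, v⟫_ℂ := by
  rw [Submodule.coe_inner, Submodule.coe_inner]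
  show ⟪Vop S (u : H), Vop S (v : H)⟫_ℂ = _
  rw [← ContinuousLinearMap.adjoint_inner_right]
  have : adjoint (Vop S) (Vop S (v : H)) = (v : H) := by
    have h := ContinuousLinearMap.ext_iff.mp (Wop_mul_Vop S hck) (v : H)
    simp only [ContinuousLinearMap.mul_apply] at h
    rw [adjoint_Vop, h]
    exact (mem_Kker S).mp v.2
  rw [this]

noncomputable def Vuequiv : ↥(Kker S) ≃ₗᵢ[ℂ] ↥(Kker S) :=
  LinearEquiv.isometryOfInner
    (LinearEquiv.ofLinear (Vflin S hck) (Vglin S)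
      (LinearMap.ext fun u => Vf_Vg S hck u)
      (LinearMap.ext fun u => Vg_Vf S hck u))
    (fun u v => Vf_inner S hck u v)

lemma Vuequiv_apply (u : ↥(Kker S)) : Vuequiv S hck u = Vflin S hck u := rfl

end cyc3
end Stmt11Aux

/-- Every (nondegenerate) Cuntz–Krieger family `S` for the cycle
graph `Cₙ` on a Hilbert space `H` is unitarily equivalent to the model on
`ℂⁿ ⊗ K ≅ ⊕ⁿ K`: there exist a Hilbert space `K`, a unitary `Vu` on `K` and a
unitary `U : H ≅ ⊕ⁿ K` with `U S_{e_i} U⁻¹ = E_{i,i+1} ⊗ I` for `i + 1 < n`,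
`U S_{e_n} U⁻¹ = E_{n,1} ⊗ Vu`, and `U S_{v_i} U⁻¹ = E_{i,i} ⊗ I`. -/
theorem stmt11 (n : ℕ) [NeZero n] {H : Type} [NormedAddCommGroup H]
    [InnerProductSpace ℂ H] [CompleteSpace H]
    (S : TCKFamily (cycleGraph n) H)
    (hck : ∀ i : Fin n, S.Se i * ContinuousLinearMap.adjoint (S.Se i) = S.Sv (i + 1))
    (hnd : ∑ v : Fin n, S.Sv v = 1) :
    ∃ (K : Type) (_ : NormedAddCommGroup K) (_ : InnerProductSpace ℂ K)
      (_ : CompleteSpace K) (Vu : K ≃ₗᵢ[ℂ] K)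
      (U : H ≃ₗᵢ[ℂ] PiLp 2 (fun _ : Fin n => K)),
      (∀ (v : Fin n) (x : H) (a : Fin n),
        U (S.Sv v x) a = if a = v then U x a else 0) ∧
      (∀ (i : Fin n) (x : H) (a : Fin n), (i : ℕ) + 1 < n →
        U (S.Se i x) a = if a = i + 1 then U x i else 0) ∧
      (∀ (i : Fin n) (x : H) (a : Fin n), (i : ℕ) + 1 = n →
        U (S.Se i x) a = if a = i + 1 then Vu (U x i) else 0) := by
  classical
  have hck' : ∀ i : Fin n,
      Stmt11Aux.s S i * ContinuousLinearMap.adjoint (Stmt11Aux.s S i) = Stmt11Aux.p S (i + 1) := hck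
  have hnd' : ∑ v : Fin n, Stmt11Aux.p S v = 1 := hnd
  refine ⟨↥(Stmt11Aux.Kker S), inferInstance, inferInstance, inferInstance,
    Stmt11Aux.Vuequiv S hck', Stmt11Aux.Uequiv S hck' hnd', ?_, ?_, ?_⟩
  · -- vertex projections
    intro v x a
    rw [Stmt11Aux.Uequiv_apply, Stmt11Aux.Uequiv_apply]
    apply Subtype.ext
    rw [apply_ite (fun z : ↥(Stmt11Aux.Kker S) => (z : H))]
    show Stmt11Aux.Bop S a.val (S.Sv v x)
      = if a = v then (Stmt11Aux.Ulin S x a : H) else ((0 : ↥(Stmt11Aux.Kker S)) : H)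
    rw [ZeroMemClass.coe_zero, Stmt11Aux.Ulin_apply]
    have h := ContinuousLinearMap.ext_iff.mp (Stmt11Aux.Bop_mul_p S hck' a v) x
    simp only [ContinuousLinearMap.mul_apply] at h
    by_cases hav : a = v
    · rw [if_pos hav] at h ⊢; exact h
    · rw [if_neg hav] at h ⊢; rw [ContinuousLinearMap.zero_apply] at h; exact h
  · -- non-wrapping edges
    intro i x a hlt
    rw [Stmt11Aux.Uequiv_apply, Stmt11Aux.Uequiv_apply]
    apply Subtype.ext
    rw [apply_ite (fun z : ↥(Stmt11Aux.Kker S) => (z : H))]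
    show Stmt11Aux.Bop S a.val (S.Se i x)
      = if a = i + 1 then (Stmt11Aux.Ulin S x i : H) else ((0 : ↥(Stmt11Aux.Kker S)) : H)
    rw [ZeroMemClass.coe_zero, Stmt11Aux.Ulin_apply]
    by_cases ha : a = i + 1
    · rw [if_pos ha, ha]
      have h := ContinuousLinearMap.ext_iff.mp (Stmt11Aux.Bop_succ_mul_s S hck' i hlt) x
      simp only [ContinuousLinearMap.mul_apply] at h; exact h
    · rw [if_neg ha]
      have h := ContinuousLinearMap.ext_iff.mp (Stmt11Aux.Bop_mul_s_ne S hck' a i ha) x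
      simp only [ContinuousLinearMap.mul_apply, ContinuousLinearMap.zero_apply] at h; exact h
  · -- the wrapping edge
    intro i x a hone
    rw [Stmt11Aux.Uequiv_apply, Stmt11Aux.Uequiv_apply]
    apply Subtype.ext
    rw [apply_ite (fun z : ↥(Stmt11Aux.Kker S) => (z : H))]
    show Stmt11Aux.Bop S a.val (S.Se i x)
      = if a = i + 1 then ((Stmt11Aux.Vuequiv S hck' (Stmt11Aux.Ulin S x i) : ↥(Stmt11Aux.Kker S)) : H)
        else ((0 : ↥(Stmt11Aux.Kker S)) : H)
    rw [ZeroMemClass.coe_zero]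
    have hival : (i : ℕ) = n - 1 := by omega
    have hicast : i = ((n - 1 : ℕ) : Fin n) := by
      apply Fin.ext
      rw [Fin.val_cast_of_lt (by omega), hival]
    have hi0 : i + 1 = (0 : Fin n) := by rw [hicast]; exact Stmt11Aux.cast_pred_add_one
    by_cases ha : a = i + 1
    · rw [if_pos ha]
      have haval : a.val = 0 := by rw [ha, hi0]; simp
      rw [haval]
      -- LHS : Bop S 0 (S.Se i x) = p S 0 (S.Se i x) = S.Se i x
      have hLHS : Stmt11Aux.Bop S 0 (S.Se i x) = S.Se i x := by
        have h3 : Stmt11Aux.p S 0 * Stmt11Aux.s S i = Stmt11Aux.s S i := by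
          rw [hicast]; exact Stmt11Aux.p0_mul_spred S hck'
        have h4 := ContinuousLinearMap.ext_iff.mp h3 x
        simp only [ContinuousLinearMap.mul_apply] at h4; exact h4
      rw [hLHS]
      -- RHS
      have hRHS : ((Stmt11Aux.Vuequiv S hck' (Stmt11Aux.Ulin S x i) : ↥(Stmt11Aux.Kker S)) : H)
          = Stmt11Aux.Vop S (Stmt11Aux.Bop S i.val x) := rfl
      rw [hRHS, hival]
      have h5 := ContinuousLinearMap.ext_iff.mp (Stmt11Aux.Vop_mul_Bop S hck') x
      simp only [ContinuousLinearMap.mul_apply] at h5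
      rw [h5, ← hicast]
      rfl
    · rw [if_neg ha]
      have h := ContinuousLinearMap.ext_iff.mp (Stmt11Aux.Bop_mul_s_ne S hck' a i ha) x
      simp only [ContinuousLinearMap.mul_apply, ContinuousLinearMap.zero_apply] at h; exact h
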